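/- arXiv:1005.5170 — 3 statements merged into one kernel-verified Lean document; each statement's English description precedes it below -/
import Mathlib

section
/- Second-order Wirtinger–Taylor expansion: let f : ℂ → ℂ with f = u + iv, where u and v, viewed as functions on ℝ², are twice differentiable at c = c₁ + i c₂ (so they admit second-order Taylor expansions with Hessians H_u, H_v). Then f(c+h) = f(c) + ∂f/∂z(c)·h + ∂f/∂z*(c)·h̄ + ½·( ∂²f/∂z²(c)·h² + ∂²f/∂z∂z*(c)·h·h̄ + ∂²f/∂z*∂z(c)·h̄·h + ∂²f/∂z*²(c)·h̄² ) + o(|h|²) as h → 0, where the second-order Wirtinger derivatives are obtained by iterating the Wirtinger operators: ∂²f/∂z² = ∂/∂z(∂f/∂z), ∂²f/∂z∂z* = ∂/∂z(∂f/∂z*), ∂²f/∂z*∂z = ∂/∂z*(∂f/∂z), ∂²f/∂z*² = ∂/∂z*(∂f/∂z*). -/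
open Complex Filter Asymptotics Topology

/-- The Wirtinger derivative `∂f/∂z (c) = ½ (∂f/∂x (c) - i ∂f/∂y (c))`. -/
noncomputable def wderiv (f : ℂ → ℂ) (c : ℂ) : ℂ :=
  (1 / 2 : ℂ) * (fderiv ℝ f c 1 - Complex.I * fderiv ℝ f c Complex.I)

/-- The conjugate Wirtinger derivative `∂f/∂z* (c) = ½ (∂f/∂x (c) + i ∂f/∂y (c))`. -/
noncomputable def cwderiv (f : ℂ → ℂ) (c : ℂ) : ℂ :=
  (1 / 2 : ℂ) * (fderiv ℝ f c 1 + Complex.I * fderiv ℝ f c Complex.I)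

theorem quad_expansion_aux (f : ℂ → ℂ) (c : ℂ)
    (hf : ∀ᶠ z in 𝓝 c, DifferentiableAt ℝ f z)
    (hf' : DifferentiableAt ℝ (fun z => fderiv ℝ f z) c) :
    (fun h : ℂ => f (c + h) - f c - fderiv ℝ f c h
        - (1 / 2 : ℝ) • fderiv ℝ (fderiv ℝ f) c h h)
      =o[𝓝 (0 : ℂ)] fun h : ℂ => ‖h‖ ^ 2 := by
  set A := fderiv ℝ f c with hA
  set B := fderiv ℝ (fderiv ℝ f) c with hB
  rw [isLittleO_iff]
  intro ε hε
  have hB' : (fun k : ℂ => fderiv ℝ f (c + k) - A - B k) =o[𝓝 0] fun k => k := by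
    rw [← hasFDerivAt_iff_isLittleO_nhds_zero]
    exact hf'.hasFDerivAt
  have h1 : ∀ᶠ k : ℂ in 𝓝 0, ‖fderiv ℝ f (c + k) - A - B k‖ ≤ ε * ‖k‖ :=
    hB'.bound hε
  have h2 : ∀ᶠ k : ℂ in 𝓝 0, DifferentiableAt ℝ f (c + k) := by
    have : Tendsto (fun k : ℂ => c + k) (𝓝 0) (𝓝 c) :=
      Continuous.tendsto' (by continuity) 0 c (by simp)
    exact this.eventually hf
  obtain ⟨δ, hδ, hball⟩ := Metric.eventually_nhds_iff.1 (h1.and h2)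
  have key : ∀ h : ℂ, ‖h‖ < δ →
      ‖f (c + h) - f c - A h - (1 / 2 : ℝ) • B h h‖ ≤ ε * ‖h‖ ^ 2 := by
    intro h hh
    set φ : ℝ → ℂ := fun t => f (c + t • h) - t • A h - (t ^ 2 / 2) • B h h with hφ
    have hsm : ∀ t : ℝ, t ∈ Set.Icc (0:ℝ) 1 → ‖t • h‖ < δ := by
      intro t ht
      calc ‖t • h‖ = |t| * ‖h‖ := by rw [norm_smul, Real.norm_eq_abs]
      _ ≤ 1 * ‖h‖ := by
          gcongr
          rw [abs_le]; exact ⟨by linarith [ht.1], ht.2⟩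
      _ < δ := by simpa using hh
    have hmem : ∀ t : ℝ, t ∈ Set.Icc (0:ℝ) 1 →
        (‖fderiv ℝ f (c + t • h) - A - B (t • h)‖ ≤ ε * ‖t • h‖ ∧
          DifferentiableAt ℝ f (c + t • h)) := by
      intro t ht
      apply hball
      simpa [dist_eq_norm] using hsm t ht
    have hderiv : ∀ t : ℝ, t ∈ Set.Icc (0:ℝ) 1 →
        HasDerivWithinAt φ ((fderiv ℝ f (c + t • h) - A - B (t • h)) h) (Set.Icc 0 1) t := by
      intro t ht
      have hd1 : HasDerivAt (fun t : ℝ => f (c + t • h)) (fderiv ℝ f (c + t • h) h) t := by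
        have hc : HasDerivAt (fun t : ℝ => c + t • h) h t := by
          simpa using ((hasDerivAt_id t).smul_const h).const_add c
        have := ((hmem t ht).2.hasFDerivAt.comp_hasDerivAt t hc)
        exact this
      have hd2 : HasDerivAt (fun t : ℝ => t • A h) (A h) t := by
        simpa using (hasDerivAt_id t).smul_const (A h)
      have hd3 : HasDerivAt (fun t : ℝ => (t ^ 2 / 2) • B h h) (t • B h h) t := by
        have : HasDerivAt (fun t : ℝ => t ^ 2 / 2) t t := by
          simpa using ((hasDerivAt_pow 2 t).div_const 2)
        simpa using this.smul_const (B h h)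
      have := (hd1.sub hd2).sub hd3
      have heq : fderiv ℝ f (c + t • h) h - A h - t • B h h
          = (fderiv ℝ f (c + t • h) - A - B (t • h)) h := by
        simp only [ContinuousLinearMap.sub_apply, map_smul, ContinuousLinearMap.smul_apply]
      rw [← heq]
      exact this.hasDerivWithinAt
    have hbound : ∀ t : ℝ, t ∈ Set.Ico (0:ℝ) 1 →
        ‖(fderiv ℝ f (c + t • h) - A - B (t • h)) h‖ ≤ ε * ‖h‖ ^ 2 := by
      intro t ht
      have ht' : t ∈ Set.Icc (0:ℝ) 1 := ⟨ht.1, ht.2.le⟩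
      calc ‖(fderiv ℝ f (c + t • h) - A - B (t • h)) h‖
          ≤ ‖fderiv ℝ f (c + t • h) - A - B (t • h)‖ * ‖h‖ :=
            ContinuousLinearMap.le_opNorm _ _
        _ ≤ (ε * ‖t • h‖) * ‖h‖ := by gcongr; exact (hmem t ht').1
        _ ≤ (ε * ‖h‖) * ‖h‖ := by
            gcongr
            rw [norm_smul, Real.norm_eq_abs]
            calc |t| * ‖h‖ ≤ 1 * ‖h‖ := by
                  gcongr; rw [abs_le]; exact ⟨by linarith [ht.1], ht.2.le⟩
              _ = ‖h‖ := one_mul _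
        _ = ε * ‖h‖ ^ 2 := by ring
    have := norm_image_sub_le_of_norm_deriv_le_segment_01' hderiv hbound
    have hφ1 : φ 1 - φ 0 = f (c + h) - f c - A h - (1 / 2 : ℝ) • B h h := by
      simp [hφ]
      ring_nf
    rwa [hφ1] at this
  filter_upwards [Metric.ball_mem_nhds (0:ℂ) hδ] with h hh
  have := key h (by simpa [dist_eq_norm] using hh)
  calc ‖f (c + h) - f c - A h - (1 / 2 : ℝ) • B h h‖ ≤ ε * ‖h‖ ^ 2 := this
    _ = ε * ‖(‖h‖ ^ 2 : ℝ)‖ := by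
        congr 1
        rw [Real.norm_eq_abs, _root_.abs_of_nonneg (by positivity)]

/-- **Second-order Wirtinger–Taylor expansion.** If `f : ℂ → ℂ` is twice differentiable in
the real sense at `c` (it is differentiable over `ℝ` in a neighborhood of `c` and its real
Fréchet derivative is differentiable at `c`), then
`f (c+h) = f c + ∂f/∂z (c) h + ∂f/∂z* (c) h* + ½ (∂²f/∂z² (c) h² + ∂²f/∂z∂z* (c) h h*
  + ∂²f/∂z*∂z (c) h* h + ∂²f/∂z*² (c) (h*)²) + o(|h|²)` as `h → 0`, where the second-order
Wirtinger derivatives are obtained by iterating the Wirtinger operators. -/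
theorem wirtinger_taylor_second_order (f : ℂ → ℂ) (c : ℂ)
    (hf : ∀ᶠ z in 𝓝 c, DifferentiableAt ℝ f z)
    (hf' : DifferentiableAt ℝ (fun z => fderiv ℝ f z) c) :
    (fun h : ℂ =>
        f (c + h) - f c - wderiv f c * h - cwderiv f c * (starRingEnd ℂ) h
          - (1 / 2 : ℂ) *
            (wderiv (fun z => wderiv f z) c * h ^ 2
              + wderiv (fun z => cwderiv f z) c * (h * (starRingEnd ℂ) h)
              + cwderiv (fun z => wderiv f z) c * ((starRingEnd ℂ) h * h)
              + cwderiv (fun z => cwderiv f z) c * ((starRingEnd ℂ) h) ^ 2))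
      =o[𝓝 (0 : ℂ)] fun h : ℂ => ‖h‖ ^ 2 := by
  have key := quad_expansion_aux f c hf hf'
  set A := fderiv ℝ f c with hA
  set B := fderiv ℝ (fderiv ℝ f) c with hB
  -- derivatives of the Wirtinger derivatives
  have hBfd : HasFDerivAt (fun z => fderiv ℝ f z) B c := hf'.hasFDerivAt
  have h1 : HasFDerivAt (fun z => fderiv ℝ f z 1)
      ((ContinuousLinearMap.apply ℝ ℂ (1:ℂ)).comp B) c := by
    exact (ContinuousLinearMap.apply ℝ ℂ (1:ℂ)).hasFDerivAt.comp c hBfd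
  have hI : HasFDerivAt (fun z => fderiv ℝ f z Complex.I)
      ((ContinuousLinearMap.apply ℝ ℂ Complex.I).comp B) c := by
    exact (ContinuousLinearMap.apply ℝ ℂ Complex.I).hasFDerivAt.comp c hBfd
  have hw : HasFDerivAt (fun z => wderiv f z)
      ((1/2 : ℂ) • (((ContinuousLinearMap.apply ℝ ℂ (1:ℂ)).comp B)
        - Complex.I • ((ContinuousLinearMap.apply ℝ ℂ Complex.I).comp B))) c := by
    simp only [wderiv]
    exact (h1.sub (hI.const_mul Complex.I)).const_mul (1/2 : ℂ)
  have hcw : HasFDerivAt (fun z => cwderiv f z)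
      ((1/2 : ℂ) • (((ContinuousLinearMap.apply ℝ ℂ (1:ℂ)).comp B)
        + Complex.I • ((ContinuousLinearMap.apply ℝ ℂ Complex.I).comp B))) c := by
    simp only [cwderiv]
    exact (h1.add (hI.const_mul Complex.I)).const_mul (1/2 : ℂ)
  have Dw : ∀ k : ℂ, fderiv ℝ (fun z => wderiv f z) c k
      = (1/2 : ℂ) * (B k 1 - Complex.I * B k Complex.I) := by
    intro k
    rw [hw.fderiv]
    simp [ContinuousLinearMap.smul_apply, ContinuousLinearMap.sub_apply,
      ContinuousLinearMap.comp_apply, ContinuousLinearMap.apply_apply, smul_eq_mul]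
  have Dcw : ∀ k : ℂ, fderiv ℝ (fun z => cwderiv f z) c k
      = (1/2 : ℂ) * (B k 1 + Complex.I * B k Complex.I) := by
    intro k
    rw [hcw.fderiv]
    simp [ContinuousLinearMap.smul_apply, ContinuousLinearMap.add_apply,
      ContinuousLinearMap.comp_apply, ContinuousLinearMap.apply_apply, smul_eq_mul]
    ring
  have W1eq : wderiv (fun z => wderiv f z) c
      = (1/2 : ℂ) * ((1/2 : ℂ) * (B 1 1 - Complex.I * B 1 Complex.I)
        - Complex.I * ((1/2 : ℂ) * (B Complex.I 1 - Complex.I * B Complex.I Complex.I))) := by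
    rw [wderiv, Dw 1, Dw Complex.I]
  have W2eq : wderiv (fun z => cwderiv f z) c
      = (1/2 : ℂ) * ((1/2 : ℂ) * (B 1 1 + Complex.I * B 1 Complex.I)
        - Complex.I * ((1/2 : ℂ) * (B Complex.I 1 + Complex.I * B Complex.I Complex.I))) := by
    rw [wderiv, Dcw 1, Dcw Complex.I]
  have W3eq : cwderiv (fun z => wderiv f z) c
      = (1/2 : ℂ) * ((1/2 : ℂ) * (B 1 1 - Complex.I * B 1 Complex.I)
        + Complex.I * ((1/2 : ℂ) * (B Complex.I 1 - Complex.I * B Complex.I Complex.I))) := by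
    rw [cwderiv, Dw 1, Dw Complex.I]
  have W4eq : cwderiv (fun z => cwderiv f z) c
      = (1/2 : ℂ) * ((1/2 : ℂ) * (B 1 1 + Complex.I * B 1 Complex.I)
        + Complex.I * ((1/2 : ℂ) * (B Complex.I 1 + Complex.I * B Complex.I Complex.I))) := by
    rw [cwderiv, Dcw 1, Dcw Complex.I]
  have funeq : (fun h : ℂ =>
        f (c + h) - f c - wderiv f c * h - cwderiv f c * (starRingEnd ℂ) h
          - (1 / 2 : ℂ) *
            (wderiv (fun z => wderiv f z) c * h ^ 2
              + wderiv (fun z => cwderiv f z) c * (h * (starRingEnd ℂ) h)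
              + cwderiv (fun z => wderiv f z) c * ((starRingEnd ℂ) h * h)
              + cwderiv (fun z => cwderiv f z) c * ((starRingEnd ℂ) h) ^ 2))
      = (fun h : ℂ => f (c + h) - f c - A h - (1 / 2 : ℝ) • B h h) := by
    funext h
    obtain ⟨x, y⟩ := h
    rw [Complex.mk_eq_add_mul_I]
    have hz : (x:ℂ) + (y:ℂ) * Complex.I = x • (1:ℂ) + y • Complex.I := by
      simp [Complex.real_smul]
    have Tlem : ∀ (T : ℂ →L[ℝ] ℂ), T ((x:ℂ) + (y:ℂ) * Complex.I)
        = (x:ℂ) * T 1 + (y:ℂ) * T Complex.I := by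
      intro T
      rw [hz, map_add, map_smul, map_smul]
      simp [Complex.real_smul]
    have Bap : B ((x:ℂ) + (y:ℂ) * Complex.I) = x • B 1 + y • B Complex.I := by
      rw [hz, map_add, map_smul, map_smul]
    have Bhh : B ((x:ℂ) + (y:ℂ) * Complex.I) ((x:ℂ) + (y:ℂ) * Complex.I)
        = (x:ℂ) * ((x:ℂ) * B 1 1 + (y:ℂ) * B 1 Complex.I)
          + (y:ℂ) * ((x:ℂ) * B Complex.I 1 + (y:ℂ) * B Complex.I Complex.I) := by
      rw [Bap]
      simp only [ContinuousLinearMap.add_apply, ContinuousLinearMap.smul_apply]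
      rw [Tlem (B 1), Tlem (B Complex.I), Complex.real_smul, Complex.real_smul]
    have hsmul : (1 / 2 : ℝ) • B ((x:ℂ) + (y:ℂ) * Complex.I) ((x:ℂ) + (y:ℂ) * Complex.I)
        = (1/2 : ℂ) * B ((x:ℂ) + (y:ℂ) * Complex.I) ((x:ℂ) + (y:ℂ) * Complex.I) := by
      rw [Complex.real_smul]; norm_num
    have hcj : (starRingEnd ℂ) ((x:ℂ) + (y:ℂ) * Complex.I) = (x:ℂ) - (y:ℂ) * Complex.I := by
      simp [Complex.ext_iff]
    rw [W1eq, W2eq, W3eq, W4eq, wderiv, cwderiv, hsmul, Bhh, hcj, Tlem A, ← hA]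
    linear_combination (((y:ℂ) * A Complex.I)
      - (1/2 : ℂ) * ((Complex.I * Complex.I - 1) * (B Complex.I Complex.I) * (y:ℂ)^2
          - (x:ℂ) * (y:ℂ) * (B 1 Complex.I + B Complex.I 1))) * Complex.I_mul_I
  rw [funeq]
  exact key
end

section
/- Fréchet Cauchy–Riemann conditions (necessity): let 𝓗 be a real Hilbert space and T : 𝓗 × 𝓗 → ℂ with T = T₁ + i T₂, where T₁, T₂ are real valued. Suppose T is Fréchet complex differentiable at c = (c₁,c₂), i.e. there exists w ∈ 𝓗 × 𝓗 with (T(c+h) − T(c) − ⟨h, w⟩_ℍ)/‖h‖_ℍ → 0 as h → 0. Then T₁ and T₂ are Fréchet differentiable at c with partial gradients satisfying ∇₁T₁(c) = ∇₂T₂(c) and ∇₂T₁(c) = −∇₁T₂(c). -/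
open Complex Filter Asymptotics Topology

variable {𝓗 : Type*} [NormedAddCommGroup 𝓗] [InnerProductSpace ℝ 𝓗]

/-- The complex inner product on `ℍ = 𝓗 × 𝓗` (elements `(u, v)` representing `u + iv`):
`⟨f, g⟩_ℍ = ⟨u_f,u_g⟩ + ⟨v_f,v_g⟩ + i (⟨v_f,u_g⟩ - ⟨u_f,v_g⟩)`. -/
noncomputable def cinner (f g : 𝓗 × 𝓗) : ℂ :=
  ((inner ℝ f.1 g.1 + inner ℝ f.2 g.2 : ℝ) : ℂ)
    + ((inner ℝ f.2 g.1 - inner ℝ f.1 g.2 : ℝ) : ℂ) * Complex.I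

/-- The norm on `ℍ = 𝓗 × 𝓗`: `‖(h₁, h₂)‖_ℍ = √(‖h₁‖² + ‖h₂‖²)`. -/
noncomputable def hnorm (h : 𝓗 × 𝓗) : ℝ :=
  Real.sqrt (‖h.1‖ ^ 2 + ‖h.2‖ ^ 2)

noncomputable def cinnerCLM (w : 𝓗 × 𝓗) : (𝓗 × 𝓗) →L[ℝ] ℂ :=
  Complex.ofRealCLM.comp
      ((innerSL ℝ w.1).comp (ContinuousLinearMap.fst ℝ 𝓗 𝓗)
        + (innerSL ℝ w.2).comp (ContinuousLinearMap.snd ℝ 𝓗 𝓗))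
    + Complex.I • Complex.ofRealCLM.comp
      ((innerSL ℝ w.1).comp (ContinuousLinearMap.snd ℝ 𝓗 𝓗)
        - (innerSL ℝ w.2).comp (ContinuousLinearMap.fst ℝ 𝓗 𝓗))

lemma cinnerCLM_apply (w h : 𝓗 × 𝓗) : cinnerCLM w h = cinner h w := by
  simp [cinnerCLM, cinner, real_inner_comm, mul_comm]

lemma hnorm_isBigO : (fun h : 𝓗 × 𝓗 => hnorm h) =O[𝓝 (0 : 𝓗 × 𝓗)] fun h => h := by
  rw [← isBigO_norm_right]
  apply IsBigO.of_bound (Real.sqrt 2)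
  filter_upwards with h
  rw [Real.norm_eq_abs, hnorm, _root_.abs_of_nonneg (Real.sqrt_nonneg _)]
  calc Real.sqrt (‖h.1‖ ^ 2 + ‖h.2‖ ^ 2) ≤ Real.sqrt (2 * ‖h‖ ^ 2) := by
        apply Real.sqrt_le_sqrt
        have h1 : ‖h.1‖ ≤ ‖h‖ := norm_fst_le h
        have h2 : ‖h.2‖ ≤ ‖h‖ := norm_snd_le h
        nlinarith [norm_nonneg h.1, norm_nonneg h.2]
    _ ≤ Real.sqrt 2 * ‖‖h‖‖ := by
        rw [Real.sqrt_mul (by norm_num), Real.sqrt_sq (norm_nonneg _), norm_norm]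

/-- **Fréchet Cauchy–Riemann conditions (necessity).** Let `T : 𝓗 × 𝓗 → ℂ` with real and
imaginary parts `T₁, T₂`. If `T` is Fréchet complex differentiable at `c`, i.e. there is a
`w` with `(T (c+h) - T c - ⟨h, w⟩_ℍ) / ‖h‖_ℍ → 0` as `h → 0`, then `T₁` and `T₂` are Fréchet
differentiable at `c`, with partial gradients satisfying `∇₁T₁ c = ∇₂T₂ c` and
`∇₂T₁ c = -∇₁T₂ c`. -/
theorem frechet_cauchy_riemann_of_complex_differentiable [CompleteSpace 𝓗]
    (T : 𝓗 × 𝓗 → ℂ) (c : 𝓗 × 𝓗)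
    (hT : ∃ w : 𝓗 × 𝓗,
      (fun h : 𝓗 × 𝓗 => T (c + h) - T c - cinner h w) =o[𝓝 (0 : 𝓗 × 𝓗)] fun h => hnorm h) :
    DifferentiableAt ℝ (fun p => (T p).re) c ∧ DifferentiableAt ℝ (fun p => (T p).im) c ∧
    ∃ a₁ a₂ b₁ b₂ : 𝓗,
      (∀ h : 𝓗 × 𝓗,
        fderiv ℝ (fun p => (T p).re) c h = (inner ℝ h.1 a₁ : ℝ) + (inner ℝ h.2 a₂ : ℝ)) ∧
      (∀ h : 𝓗 × 𝓗,
        fderiv ℝ (fun p => (T p).im) c h = (inner ℝ h.1 b₁ : ℝ) + (inner ℝ h.2 b₂ : ℝ)) ∧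
      a₁ = b₂ ∧ a₂ = -b₁ := by
  obtain ⟨w, hw⟩ := hT
  have hL : HasFDerivAt T (cinnerCLM w) c := by
    rw [hasFDerivAt_iff_isLittleO_nhds_zero]
    have : (fun h : 𝓗 × 𝓗 => T (c + h) - T c - cinnerCLM w h)
        =o[𝓝 (0 : 𝓗 × 𝓗)] fun h => h := by
      refine (hw.trans_isBigO hnorm_isBigO).congr_left fun h => ?_
      rw [cinnerCLM_apply]
    exact this
  have hre : HasFDerivAt (fun p => (T p).re) (Complex.reCLM.comp (cinnerCLM w)) c :=
    Complex.reCLM.hasFDerivAt.comp c hL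
  have him : HasFDerivAt (fun p => (T p).im) (Complex.imCLM.comp (cinnerCLM w)) c :=
    Complex.imCLM.hasFDerivAt.comp c hL
  refine ⟨hre.differentiableAt, him.differentiableAt, w.1, w.2, -w.2, w.1, ?_, ?_, rfl, (neg_neg _).symm⟩
  · intro h
    rw [hre.fderiv]
    simp [cinnerCLM_apply, cinner]
  · intro h
    rw [him.fderiv]
    simp [cinnerCLM_apply, cinner, inner_neg_right]
    ring
end

section
/- Fréchet Cauchy–Riemann conditions (sufficiency): let 𝓗 be a real Hilbert space and T : 𝓗 × 𝓗 → ℂ with T = T₁ + i T₂, where T₁, T₂ are real valued. Suppose T₁ and T₂ are Fréchet differentiable at c = (c₁,c₂) with partial gradients satisfying the Fréchet Cauchy–Riemann conditions ∇₁T₁(c) = ∇₂T₂(c) and ∇₂T₁(c) = −∇₁T₂(c). Then T is Fréchet complex differentiable at c: there exists w ∈ 𝓗 × 𝓗 with (T(c+h) − T(c) − ⟨h, w⟩_ℍ)/‖h‖_ℍ → 0 as h → 0; moreover w is the element of 𝓗 × 𝓗 representing the complex conjugate of ∇₁T₁(c) + i ∇₁T₂(c), i.e. w = (∇₁T₁(c),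 −∇₁T₂(c)). -/
open Complex Filter Asymptotics Topology

variable {𝓗 : Type*} [NormedAddCommGroup 𝓗] [InnerProductSpace ℝ 𝓗]

/-- **Fréchet Cauchy–Riemann conditions (sufficiency).** Let `T : 𝓗 × 𝓗 → ℂ` with real and
imaginary parts `T₁, T₂`, both Fréchet differentiable at `c`, having partial gradients
`∇₁T₁ c = a₁`, `∇₂T₁ c = a₂`, `∇₁T₂ c = b₁`, `∇₂T₂ c = b₂` satisfying the Fréchet
Cauchy–Riemann conditions `a₁ = b₂` and `a₂ = -b₁`. Then `T` is Fréchet complex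
differentiable at `c` with `w = (a₁, -b₁)` (representing the conjugate of `a₁ + i b₁`):
`(T (c+h) - T c - ⟨h, w⟩_ℍ) / ‖h‖_ℍ → 0` as `h → 0`. -/
theorem frechet_complex_differentiable_of_cauchy_riemann [CompleteSpace 𝓗]
    (T : 𝓗 × 𝓗 → ℂ) (c : 𝓗 × 𝓗) (a₁ a₂ b₁ b₂ : 𝓗)
    (hd1 : DifferentiableAt ℝ (fun p => (T p).re) c)
    (hd2 : DifferentiableAt ℝ (fun p => (T p).im) c)
    (hg1 : ∀ h : 𝓗 × 𝓗,
      fderiv ℝ (fun p => (T p).re) c h = (inner ℝ h.1 a₁ : ℝ) + (inner ℝ h.2 a₂ : ℝ))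
    (hg2 : ∀ h : 𝓗 × 𝓗,
      fderiv ℝ (fun p => (T p).im) c h = (inner ℝ h.1 b₁ : ℝ) + (inner ℝ h.2 b₂ : ℝ))
    (hcr1 : a₁ = b₂) (hcr2 : a₂ = -b₁) :
    (fun h : 𝓗 × 𝓗 => T (c + h) - T c - cinner h (a₁, -b₁))
      =o[𝓝 (0 : 𝓗 × 𝓗)] fun h => hnorm h := by

  -- Errors of the real and imaginary parts
  set f₁ := fderiv ℝ (fun p => (T p).re) c with hf₁
  set f₂ := fderiv ℝ (fun p => (T p).im) c with hf₂
  have H1 : (fun h : 𝓗 × 𝓗 => (T (c + h)).re - (T c).re - f₁ h)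
      =o[𝓝 (0 : 𝓗 × 𝓗)] fun h => h :=
    hasFDerivAt_iff_isLittleO_nhds_zero.mp hd1.hasFDerivAt
  have H2 : (fun h : 𝓗 × 𝓗 => (T (c + h)).im - (T c).im - f₂ h)
      =o[𝓝 (0 : 𝓗 × 𝓗)] fun h => h :=
    hasFDerivAt_iff_isLittleO_nhds_zero.mp hd2.hasFDerivAt
  -- ‖h‖ ≤ hnorm h
  have hO : (fun h : 𝓗 × 𝓗 => h) =O[𝓝 (0 : 𝓗 × 𝓗)] fun h => hnorm h := by
    refine IsBigO.of_bound 1 (Filter.Eventually.of_forall fun h => ?_)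
    have h0 : (0:ℝ) ≤ ‖h.1‖ ^ 2 + ‖h.2‖ ^ 2 := by positivity
    have hs := Real.sq_sqrt h0
    have hnn := Real.sqrt_nonneg (‖h.1‖ ^ 2 + ‖h.2‖ ^ 2)
    have h1 : ‖h.1‖ ≤ hnorm h := by
      rw [hnorm]; nlinarith [norm_nonneg h.1, norm_nonneg h.2]
    have h2 : ‖h.2‖ ≤ hnorm h := by
      rw [hnorm]; nlinarith [norm_nonneg h.1, norm_nonneg h.2]
    have : ‖h‖ = max ‖h.1‖ ‖h.2‖ := rfl
    simp only [norm_norm, one_mul, this]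
    have hnn' : (0:ℝ) ≤ hnorm h := Real.sqrt_nonneg _
    rw [Real.norm_eq_abs, _root_.abs_of_nonneg hnn']
    exact max_le h1 h2
  have H1' := H1.trans_isBigO hO
  have H2' := H2.trans_isBigO hO
  have H1c : (fun h : 𝓗 × 𝓗 => (((T (c + h)).re - (T c).re - f₁ h : ℝ) : ℂ))
      =o[𝓝 (0 : 𝓗 × 𝓗)] fun h => hnorm h := by
    refine IsLittleO.of_norm_left ?_
    simpa only [Complex.norm_real] using H1'.norm_left
  have H2c : (fun h : 𝓗 × 𝓗 => (((T (c + h)).im - (T c).im - f₂ h : ℝ) : ℂ) * Complex.I)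
      =o[𝓝 (0 : 𝓗 × 𝓗)] fun h => hnorm h := by
    refine IsLittleO.of_norm_left ?_
    simpa only [norm_mul, Complex.norm_real, Complex.norm_I, mul_one] using H2'.norm_left
  have key := H1c.add H2c
  refine key.congr_left fun h => ?_
  have e1 := hg1 h
  have e2 := hg2 h
  apply Complex.ext
  · simp only [Complex.add_re, Complex.sub_re, Complex.mul_re, Complex.ofReal_re,
      Complex.ofReal_im, Complex.I_re, Complex.I_im, cinner, hcr2, inner_neg_right, e1]
    ring
  · simp only [Complex.add_im, Complex.sub_im, Complex.mul_im, Complex.ofReal_re,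
      Complex.ofReal_im, Complex.I_re, Complex.I_im, cinner, hcr1, inner_neg_right, e2]
    ring
end
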